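/- Let G be a nilpotent group of nilpotency class at most c, X a generating set of G, s a positive integer, and H = ⟨ x^s : x ∈ X ⟩. Then G^(s^m) ≤ H for m = c(c+1)/2, i.e., g^(s^m) ∈ H for every g ∈ G. -/

import Mathlib

open Subgroup
open scoped commutatorElement

universe u

private lemma lcs_succ_comm (G : Type u) [Group G] (n : ℕ) :
    (⊤ : Subgroup G).lowerCentralSeries (n + 1) = ⁅(⊤ : Subgroup G).lowerCentralSeries n, (⊤ : Subgroup G)⁆ := rfl

private lemma lcs_map_surj {G Q : Type u} [Group G] [Group Q] (f : G →* Q)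
    (hf : Function.Surjective f) :
    ∀ n, Subgroup.map f ((⊤ : Subgroup G).lowerCentralSeries n) = (⊤ : Subgroup Q).lowerCentralSeries n := by
  intro n
  induction n with
  | zero => exact Subgroup.map_top_of_surjective f hf
  | succ n ih =>
      rw [lcs_succ_comm, lcs_succ_comm, Subgroup.map_commutator, ih,
        Subgroup.map_top_of_surjective f hf]

private lemma claim_key (s : ℕ) :
    ∀ (n : ℕ) (G : Type u) [Group G] (X : Set G), Subgroup.closure X = ⊤ →
      ∀ z ∈ (⊤ : Subgroup G).lowerCentralSeries n,
        z ^ s ^ (n + 1) ∈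
          Subgroup.closure ((fun x : G => x ^ s) '' X) ⊔ (⊤ : Subgroup G).lowerCentralSeries (n + 1) := by
  intro n
  induction n with
  | zero =>
      intro G _ X hX z _
      set N := (⊤ : Subgroup G).lowerCentralSeries 1 with hN
      set π := QuotientGroup.mk' N with hπ
      have hsurj : Function.Surjective π := QuotientGroup.mk'_surjective N
      -- image data
      have hX' : Subgroup.closure (π '' X) = ⊤ := by
        rw [← MonoidHom.map_closure, hX, Subgroup.map_top_of_surjective _ hsurj]
      have himg : (fun x : G ⧸ N => x ^ s) '' (π '' X)
          = π '' ((fun x : G => x ^ s) '' X) := by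
        rw [Set.image_image, Set.image_image]
        ext q; simp [map_pow]
      have hQbot : (⊤ : Subgroup (G ⧸ N)).lowerCentralSeries 1 = ⊥ := by
        rw [← lcs_map_surj π hsurj 1, Subgroup.map_eq_bot_iff, ← hN]
        rw [hπ, QuotientGroup.ker_mk']
      have hcomm : ∀ a b : G ⧸ N, a * b = b * a := by
        intro a b
        have : ⁅a, b⁆ ∈ (⊤ : Subgroup (G ⧸ N)).lowerCentralSeries 1 := by
          rw [lcs_succ_comm]
          exact Subgroup.commutator_mem_commutator (Subgroup.mem_top a) (Subgroup.mem_top b)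
        rw [hQbot, Subgroup.mem_bot] at this
        have := commutatorElement_eq_one_iff_mul_comm.mp this
        exact this
      set H' := Subgroup.closure ((fun x : G ⧸ N => x ^ s) '' (π '' X)) with hH'
      -- subgroup of elements whose s-th power is in H'
      let S : Subgroup (G ⧸ N) :=
        { carrier := {q | q ^ s ∈ H'}
          one_mem' := by simp [one_pow, one_mem]
          mul_mem' := by
            intro a b ha hb
            have hco : Commute a b := hcomm a b
            have : (a * b) ^ s = a ^ s * b ^ s := hco.mul_pow s
            simpa [Set.mem_setOf_eq, this] using mul_mem ha hb
          inv_mem' := by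
            intro a ha
            simp only [Set.mem_setOf_eq, inv_pow]
            exact inv_mem ha }
      have hXS : ∀ q : G ⧸ N, q ∈ S := by
        intro q
        have : (⊤ : Subgroup (G ⧸ N)) ≤ S := by
          rw [← hX']
          refine (Subgroup.closure_le S).mpr ?_
          intro x hx
          show x ^ s ∈ H'
          exact Subgroup.subset_closure ⟨x, hx, rfl⟩
        exact this (Subgroup.mem_top q)
      have hz' : (π z) ^ s ∈ H' := hXS (π z)
      rw [hH', himg, ← MonoidHom.map_closure, ← map_pow] at hz'
      have := Subgroup.mem_comap.mpr hz'
      rw [Subgroup.comap_map_eq, hπ, QuotientGroup.ker_mk'] at this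
      simpa [pow_one] using this
  | succ n ih =>
      intro G _ X hX z hz
      set N := (⊤ : Subgroup G).lowerCentralSeries (n + 2) with hN
      set π := QuotientGroup.mk' N with hπ
      have hsurj : Function.Surjective π := QuotientGroup.mk'_surjective N
      have hX' : Subgroup.closure (π '' X) = ⊤ := by
        rw [← MonoidHom.map_closure, hX, Subgroup.map_top_of_surjective _ hsurj]
      have himg : (fun x : G ⧸ N => x ^ s) '' (π '' X)
          = π '' ((fun x : G => x ^ s) '' X) := by
        rw [Set.image_image, Set.image_image]
        ext q; simp [map_pow]
      have hQbot : (⊤ : Subgroup (G ⧸ N)).lowerCentralSeries (n + 2) = ⊥ := by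
        rw [← lcs_map_surj π hsurj (n + 2), Subgroup.map_eq_bot_iff, ← hN]
        rw [hπ, QuotientGroup.ker_mk']
      have hcentral : ∀ w ∈ (⊤ : Subgroup (G ⧸ N)).lowerCentralSeries (n + 1), ∀ g : G ⧸ N,
          w * g = g * w := by
        intro w hw g
        have hmem : ⁅w, g⁆ ∈ (⊤ : Subgroup (G ⧸ N)).lowerCentralSeries (n + 2) := by
          rw [lcs_succ_comm]
          exact Subgroup.commutator_mem_commutator hw (Subgroup.mem_top g)
        rw [hQbot, Subgroup.mem_bot] at hmem
        exact commutatorElement_eq_one_iff_mul_comm.mp hmem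
      set H' := Subgroup.closure ((fun x : G ⧸ N => x ^ s) '' (π '' X)) with hH'
      have hcomm_mem : ∀ a ∈ (⊤ : Subgroup (G ⧸ N)).lowerCentralSeries n, ∀ g : G ⧸ N,
          ⁅a, g⁆ ∈ (⊤ : Subgroup (G ⧸ N)).lowerCentralSeries (n + 1) := by
        intro a ha g
        rw [lcs_succ_comm]
        exact Subgroup.commutator_mem_commutator ha (Subgroup.mem_top g)
      -- bilinearity identities
      have hom2 : ∀ a ∈ (⊤ : Subgroup (G ⧸ N)).lowerCentralSeries n, ∀ u v : G ⧸ N,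
          ⁅a, u * v⁆ = ⁅a, u⁆ * ⁅a, v⁆ := by
        intro a ha u v
        have hkey : ⁅a, u * v⁆ = ⁅a, u⁆ * (u * ⁅a, v⁆ * u⁻¹) := by group
        have hc : u * ⁅a, v⁆ = ⁅a, v⁆ * u := (hcentral _ (hcomm_mem a ha v) u).symm
        rw [hkey, hc, mul_assoc, mul_inv_cancel, mul_one]
      have hom1 : ∀ a ∈ (⊤ : Subgroup (G ⧸ N)).lowerCentralSeries n, ∀ b ∈ (⊤ : Subgroup (G ⧸ N)).lowerCentralSeries n,
          ∀ y : G ⧸ N, ⁅a * b, y⁆ = ⁅a, y⁆ * ⁅b, y⁆ := by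
        intro a ha b hb y
        have hkey : ⁅a * b, y⁆ = a * ⁅b, y⁆ * a⁻¹ * ⁅a, y⁆ := by group
        have hc : a * ⁅b, y⁆ = ⁅b, y⁆ * a := (hcentral _ (hcomm_mem b hb y) a).symm
        rw [hkey, hc, mul_assoc ⁅b, y⁆, mul_inv_cancel, mul_one]
        exact hcentral _ (hcomm_mem b hb y) ⁅a, y⁆
      have pow2 : ∀ a ∈ (⊤ : Subgroup (G ⧸ N)).lowerCentralSeries n, ∀ u : G ⧸ N, ∀ k : ℕ,
          ⁅a, u ^ k⁆ = ⁅a, u⁆ ^ k := by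
        intro a ha u k
        induction k with
        | zero => simp [commutatorElement_one_right]
        | succ k ihk => rw [pow_succ, hom2 a ha, ihk, pow_succ]
      have pow1 : ∀ a ∈ (⊤ : Subgroup (G ⧸ N)).lowerCentralSeries n, ∀ y : G ⧸ N, ∀ k : ℕ,
          ⁅a ^ k, y⁆ = ⁅a, y⁆ ^ k := by
        intro a ha y k
        induction k with
        | zero => simp [commutatorElement_one_left]
        | succ k ihk =>
            rw [pow_succ, hom1 _ (pow_mem ha k) _ ha, ihk, pow_succ]
      have inv2 : ∀ a ∈ (⊤ : Subgroup (G ⧸ N)).lowerCentralSeries n, ∀ u : G ⧸ N,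
          ⁅a, u⁻¹⁆ = ⁅a, u⁆⁻¹ := by
        intro a ha u
        have h1 : ⁅a, u⁆ * ⁅a, u⁻¹⁆ = 1 := by
          rw [← hom2 a ha, mul_inv_cancel, commutatorElement_one_right]
        exact eq_inv_of_mul_eq_one_right h1
      -- the main subgroup argument
      have hπz : π z ∈ (⊤ : Subgroup (G ⧸ N)).lowerCentralSeries (n + 1) := by
        rw [← lcs_map_surj π hsurj (n + 1)]
        exact Subgroup.mem_map_of_mem _ hz
      have key : ∀ w ∈ (⊤ : Subgroup (G ⧸ N)).lowerCentralSeries (n + 1),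
          w ^ s ^ (n + 2) ∈ H' := by
        have hS : (⊤ : Subgroup (G ⧸ N)).lowerCentralSeries (n + 1) ≤
            { carrier := {q | q ∈ (⊤ : Subgroup (G ⧸ N)).lowerCentralSeries (n + 1) ∧ q ^ s ^ (n + 2) ∈ H'}
              one_mem' := ⟨one_mem _, by simp [one_pow, one_mem]⟩
              mul_mem' := by
                intro a b ha hb
                refine ⟨mul_mem ha.1 hb.1, ?_⟩
                have hco : Commute a b := hcentral a ha.1 b
                rw [hco.mul_pow]
                exact mul_mem ha.2 hb.2
              inv_mem' := by
                intro a ha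
                refine ⟨inv_mem ha.1, ?_⟩
                rw [inv_pow]
                exact inv_mem ha.2 } := by
          refine le_trans (le_of_eq (lcs_succ_comm (G ⧸ N) n)) ?_
          refine Subgroup.commutator_le.mpr ?_
          intro a ha g _
          refine ⟨hcomm_mem a ha g, ?_⟩
          show ⁅a, g⁆ ^ s ^ (n + 2) ∈ H'
          -- reduce to generators of the quotient group
          let T : Subgroup (G ⧸ N) :=
            { carrier := {u | ⁅a, u⁆ ^ s ^ (n + 2) ∈ H'}
              one_mem' := by simp [commutatorElement_one_right, one_pow, one_mem]
              mul_mem' := by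
                intro u v hu hv
                show ⁅a, u * v⁆ ^ s ^ (n + 2) ∈ H'
                rw [hom2 a ha]
                have hco : Commute ⁅a, u⁆ ⁅a, v⁆ := hcentral _ (hcomm_mem a ha u) _
                rw [hco.mul_pow]
                exact mul_mem hu hv
              inv_mem' := by
                intro u hu
                show ⁅a, u⁻¹⁆ ^ s ^ (n + 2) ∈ H'
                rw [inv2 a ha, inv_pow]
                exact inv_mem hu }
          have hXT : ∀ u : G ⧸ N, u ∈ T := by
            intro u
            have : (⊤ : Subgroup (G ⧸ N)) ≤ T := by
              rw [← hX']
              refine (Subgroup.closure_le T).mpr ?_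
              intro x' hx'
              show ⁅a, x'⁆ ^ s ^ (n + 2) ∈ H'
              have e1 : ⁅a, x'⁆ ^ s ^ (n + 2) = ⁅a ^ s ^ (n + 1), x' ^ s⁆ := by
                have : s ^ (n + 2) = s * s ^ (n + 1) := by ring
                rw [this, pow_mul, ← pow2 a ha, pow1 a ha]
              rw [e1]
              have hmem := ih (G ⧸ N) (π '' X) hX' a ha
              rw [← SetLike.mem_coe, Subgroup.mul_normal] at hmem
              obtain ⟨h, hh, w, hw, hhw⟩ := hmem
              have hwc : ∀ g : G ⧸ N, w * g = g * w := hcentral w hw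
              have e2 : ⁅a ^ s ^ (n + 1), x' ^ s⁆ = ⁅h, x' ^ s⁆ := by
                rw [← hhw]
                have hk : ⁅h * w, x' ^ s⁆ = h * (w * x' ^ s * w⁻¹) * h⁻¹ * (x' ^ s)⁻¹ := by
                  group
                have hw2 : w * x' ^ s * w⁻¹ = x' ^ s := by
                  rw [hwc (x' ^ s), mul_assoc, mul_inv_cancel, mul_one]
                rw [hk, hw2, commutatorElement_def]
              rw [e2]
              have hx's : x' ^ s ∈ H' := Subgroup.subset_closure ⟨x', hx', rfl⟩
              rw [commutatorElement_def]
              exact mul_mem (mul_mem (mul_mem hh hx's) (inv_mem hh)) (inv_mem hx's)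
            exact this (Subgroup.mem_top u)
          exact hXT g
        intro w hw
        exact (hS hw).2
      have hz' : (π z) ^ s ^ (n + 2) ∈ H' := key (π z) hπz
      rw [hH', himg, ← MonoidHom.map_closure, ← map_pow] at hz'
      have hfin := Subgroup.mem_comap.mpr hz'
      rw [Subgroup.comap_map_eq, hπ, QuotientGroup.ker_mk'] at hfin
      exact hfin

private lemma aux_main (s : ℕ) :
    ∀ (c : ℕ) (G : Type u) [Group G], (⊤ : Subgroup G).lowerCentralSeries c = ⊥ →
      ∀ (X : Set G), Subgroup.closure X = ⊤ →
        ∀ g : G, g ^ s ^ (c * (c + 1) / 2) ∈ Subgroup.closure ((fun x : G => x ^ s) '' X) := by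
  intro c
  induction c with
  | zero =>
      intro G _ hbot X hX g
      have : g ∈ (⊥ : Subgroup G) := hbot ▸ Subgroup.mem_top g
      rw [Subgroup.mem_bot] at this
      simp [this, one_mem]
  | succ c ih =>
      intro G _ hbot X hX g
      set N := (⊤ : Subgroup G).lowerCentralSeries c with hN
      set π := QuotientGroup.mk' N with hπ
      have hsurj : Function.Surjective π := QuotientGroup.mk'_surjective N
      have hX' : Subgroup.closure (π '' X) = ⊤ := by
        rw [← MonoidHom.map_closure, hX, Subgroup.map_top_of_surjective _ hsurj]
      have himg : (fun x : G ⧸ N => x ^ s) '' (π '' X)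
          = π '' ((fun x : G => x ^ s) '' X) := by
        rw [Set.image_image, Set.image_image]
        ext q; simp [map_pow]
      have hQbot : (⊤ : Subgroup (G ⧸ N)).lowerCentralSeries c = ⊥ := by
        rw [← lcs_map_surj π hsurj c, Subgroup.map_eq_bot_iff, ← hN]
        rw [hπ, QuotientGroup.ker_mk']
      have h1 := ih (G ⧸ N) hQbot (π '' X) hX' (π g)
      rw [himg, ← MonoidHom.map_closure, ← map_pow] at h1
      have h2 := Subgroup.mem_comap.mpr h1
      rw [Subgroup.comap_map_eq, hπ, QuotientGroup.ker_mk', ← SetLike.mem_coe,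
        Subgroup.mul_normal] at h2
      obtain ⟨h, hh, w, hw, hhw⟩ := h2
      -- w is central since ⁅N, ⊤⁆ = LCS (c+1) = ⊥
      have hwc : ∀ u : G, w * u = u * w := by
        intro u
        have hmem : ⁅w, u⁆ ∈ (⊤ : Subgroup G).lowerCentralSeries (c + 1) := by
          rw [lcs_succ_comm]
          exact Subgroup.commutator_mem_commutator hw (Subgroup.mem_top u)
        rw [hbot, Subgroup.mem_bot] at hmem
        exact commutatorElement_eq_one_iff_mul_comm.mp hmem
      -- w ^ (s ^ (c + 1)) ∈ H by the key lemma
      have hwH := claim_key s c G X hX w hw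
      rw [hbot] at hwH
      rw [sup_bot_eq] at hwH
      -- arithmetic: triangle numbers
      obtain ⟨k, hk⟩ := Nat.even_mul_succ_self c
      have hT1 : c * (c + 1) / 2 = k := by omega
      have hT2 : (c + 1) * (c + 1 + 1) / 2 = k + (c + 1) := by
        have e1 : (c + 1) * (c + 1 + 1) = c * (c + 1) + 2 * (c + 1) := by ring
        omega
      have hpow : g ^ s ^ ((c + 1) * (c + 1 + 1) / 2)
          = (g ^ s ^ (c * (c + 1) / 2)) ^ s ^ (c + 1) := by
        rw [← pow_mul, ← pow_add, hT1, hT2]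
      rw [hpow, ← hhw]
      have hco : Commute h w := (hwc h).symm
      rw [hco.mul_pow]
      exact mul_mem (pow_mem hh _) hwH

theorem stmt_13 {G : Type*} [Group G] [Group.IsNilpotent G] (c : ℕ)
    (hc : Group.nilpotencyClass G ≤ c) (X : Set G) (hX : Subgroup.closure X = ⊤)
    (s : ℕ) (hs : 0 < s) :
    ∀ g : G, g ^ s ^ (c * (c + 1) / 2) ∈ Subgroup.closure ((fun x : G => x ^ s) '' X) := by
  have hbot : (⊤ : Subgroup G).lowerCentralSeries c = ⊥ :=
    Subgroup.lowerCentralSeries_eq_bot_iff_nilpotencyClass_le.mpr hc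
  exact aux_main s c G hbot X hX
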